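/- Let Λ be a ring. The map sending a prelocalizing subcategory 𝒴 of Mod Λ (a full subcategory closed under submodules, quotients, and arbitrary direct sums) to the set {L ⊆ Λ right ideal : Λ/L ∈ 𝒴} is a bijection onto the set of prelocalizing filters of right ideals of Λ. The inverse sends a filter ℱ to {M : Ann(x) ∈ ℱ for every x ∈ M}. -/

import Mathlib

open CategoryTheory DirectSum

universe u

variable (Λ : Type u) [Ring Λ]

/-- A *prelocalizing subcategory* of the category of right `Λ`-modules (modeled as
`Λᵐᵒᵖ`-modules): a class of modules closed under submodules, quotient modules, and
arbitrary direct sums. -/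
def IsPrelocSubcat (P : Set (ModuleCat.{u} Λᵐᵒᵖ)) : Prop :=
  (∀ (M N : ModuleCat.{u} Λᵐᵒᵖ) (f : N ⟶ M), Mono f → M ∈ P → N ∈ P) ∧
  (∀ (M N : ModuleCat.{u} Λᵐᵒᵖ) (f : M ⟶ N), Epi f → M ∈ P → N ∈ P) ∧
  (∀ (ι : Type u) (M : ι → ModuleCat.{u} Λᵐᵒᵖ), (∀ i, M i ∈ P) →
    ModuleCat.of Λᵐᵒᵖ (⨁ i, (M i : Type u)) ∈ P)

/-- Left multiplication by `a` on `Λ`, as an endomorphism of `Λ` as a right `Λ`-module.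
The preimage of a right ideal `L` under this map is `a⁻¹L = {b | a * b ∈ L}`. -/
def leftMulMap (a : Λ) : Λ →ₗ[Λᵐᵒᵖ] Λ where
  toFun b := a * b
  map_add' b c := mul_add a b c
  map_smul' r b := by
    simp only [MulOpposite.smul_eq_mul_unop, RingHom.id_apply]
    exact (mul_assoc a b r.unop).symm

/-- A *prelocalizing filter* of right ideals of `Λ`: a set of right ideals containing `Λ`,
upward closed, closed under finite intersections, and such that `a⁻¹L ∈ ℱ` for each
`L ∈ ℱ` and `a ∈ Λ`. -/
def IsPrelocFilter (F : Set (Submodule Λᵐᵒᵖ Λ)) : Prop :=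
  ⊤ ∈ F ∧
  (∀ I J : Submodule Λᵐᵒᵖ Λ, I ∈ F → I ≤ J → J ∈ F) ∧
  (∀ I J : Submodule Λᵐᵒᵖ Λ, I ∈ F → J ∈ F → I ⊓ J ∈ F) ∧
  (∀ I ∈ F, ∀ a : Λ, Submodule.comap (leftMulMap Λ a) I ∈ F)

/-- The filter `{L | Λ/L ∈ 𝒴}` associated to a prelocalizing subcategory `𝒴`. -/
def toFilter (P : Set (ModuleCat.{u} Λᵐᵒᵖ)) : Set (Submodule Λᵐᵒᵖ Λ) :=
  {L | ModuleCat.of Λᵐᵒᵖ (Λ ⧸ L) ∈ P}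

/-- The map `Λ → M`, `a ↦ x·a`, for a right `Λ`-module `M` and `x : M`; its kernel is the
annihilator right ideal `Ann(x)`. -/
def annMap {M : Type u} [AddCommGroup M] [Module Λᵐᵒᵖ M] (x : M) : Λ →ₗ[Λᵐᵒᵖ] M where
  toFun a := MulOpposite.op a • x
  map_add' a b := by simp [add_smul]
  map_smul' r a := by
    simp only [MulOpposite.smul_eq_mul_unop, RingHom.id_apply]
    rw [MulOpposite.op_mul, MulOpposite.op_unop, mul_smul]

/-- The subcategory `{M | Ann(x) ∈ ℱ for every x ∈ M}` associated to a filter `ℱ`. -/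
def toSubcat (F : Set (Submodule Λᵐᵒᵖ Λ)) : Set (ModuleCat.{u} Λᵐᵒᵖ) :=
  {M | ∀ x : M, LinearMap.ker (annMap Λ x) ∈ F}


section Aux

variable {Λ}

private lemma aux_subsingleton_mem (P : Set (ModuleCat.{u} Λᵐᵒᵖ)) (hP : IsPrelocSubcat Λ P)
    (M : ModuleCat.{u} Λᵐᵒᵖ) (hM : Subsingleton M) : M ∈ P := by
  have hZ := hP.2.2 PEmpty.{u+1} (fun i => i.elim) (fun i => i.elim)
  refine hP.1 _ M (0 : M ⟶ _) ?_ hZ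
  rw [ModuleCat.mono_iff_injective]
  exact Function.injective_of_subsingleton _

private lemma aux_upward (P : Set (ModuleCat.{u} Λᵐᵒᵖ)) (hP : IsPrelocSubcat Λ P)
    (I J : Submodule Λᵐᵒᵖ Λ) (hI : ModuleCat.of Λᵐᵒᵖ (Λ ⧸ I) ∈ P) (hIJ : I ≤ J) :
    ModuleCat.of Λᵐᵒᵖ (Λ ⧸ J) ∈ P := by
  refine hP.2.1 _ _ (ModuleCat.ofHom (Submodule.liftQ I J.mkQ (by rw [Submodule.ker_mkQ]; exact hIJ)) :
    ModuleCat.of Λᵐᵒᵖ (Λ ⧸ I) ⟶ ModuleCat.of Λᵐᵒᵖ (Λ ⧸ J)) ?_ hI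
  rw [ModuleCat.epi_iff_surjective]
  intro y
  obtain ⟨b, rfl⟩ := Submodule.mkQ_surjective J y
  exact ⟨Submodule.Quotient.mk b, rfl⟩

private lemma aux_inter (P : Set (ModuleCat.{u} Λᵐᵒᵖ)) (hP : IsPrelocSubcat Λ P)
    (I J : Submodule Λᵐᵒᵖ Λ) (hI : ModuleCat.of Λᵐᵒᵖ (Λ ⧸ I) ∈ P)
    (hJ : ModuleCat.of Λᵐᵒᵖ (Λ ⧸ J) ∈ P) :
    ModuleCat.of Λᵐᵒᵖ (Λ ⧸ (I ⊓ J)) ∈ P := by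
  classical
  let K : ULift.{u} Bool → Submodule Λᵐᵒᵖ Λ := fun b => bif b.down then I else J
  have hD := hP.2.2 (ULift.{u} Bool) (fun b => ModuleCat.of Λᵐᵒᵖ (Λ ⧸ K b))
    (by rintro ⟨(_|_)⟩; exacts [hJ, hI])
  have hne : (⟨true⟩ : ULift.{u} Bool) ≠ ⟨false⟩ := by
    intro h; exact Bool.true_eq_false_eq_False (congrArg ULift.down h)
  let φ : Λ →ₗ[Λᵐᵒᵖ] (⨁ b : ULift.{u} Bool, (Λ ⧸ K b)) :=
    (DirectSum.lof Λᵐᵒᵖ (ULift.{u} Bool) (fun b => Λ ⧸ K b) ⟨true⟩).comp (K ⟨true⟩).mkQ +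
    (DirectSum.lof Λᵐᵒᵖ (ULift.{u} Bool) (fun b => Λ ⧸ K b) ⟨false⟩).comp (K ⟨false⟩).mkQ
  have hker : ∀ a : Λ, φ a = 0 ↔ a ∈ I ⊓ J := by
    intro a
    constructor
    · intro ha
      have h1 := congrArg (DirectSum.component Λᵐᵒᵖ (ULift.{u} Bool) (fun b => Λ ⧸ K b) ⟨true⟩) ha
      have h2 := congrArg (DirectSum.component Λᵐᵒᵖ (ULift.{u} Bool) (fun b => Λ ⧸ K b) ⟨false⟩) ha
      simp only [φ, LinearMap.add_apply, LinearMap.comp_apply, map_add, map_zero,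
        DirectSum.component.of, hne, hne.symm, dite_true, dite_false, dite_eq_ite, if_true,
        if_false, add_zero, zero_add, Submodule.mkQ_apply] at h1 h2
      exact ⟨(Submodule.Quotient.mk_eq_zero _).1 h1, (Submodule.Quotient.mk_eq_zero _).1 h2⟩
    · rintro ⟨haI, haJ⟩
      have e1 : (K ⟨true⟩).mkQ a = 0 := (Submodule.Quotient.mk_eq_zero _).2 haI
      have e2 : (K ⟨false⟩).mkQ a = 0 := (Submodule.Quotient.mk_eq_zero _).2 haJ
      simp only [φ, LinearMap.add_apply, LinearMap.comp_apply, e1, e2, map_zero, add_zero]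
  refine hP.1 _ _ (ModuleCat.ofHom (Submodule.liftQ (I ⊓ J) φ
    (fun a ha => LinearMap.mem_ker.2 ((hker a).2 ha))) :
    ModuleCat.of Λᵐᵒᵖ (Λ ⧸ (I ⊓ J)) ⟶ _) ?_ hD
  rw [ModuleCat.mono_iff_ker_eq_bot, ModuleCat.hom_ofHom, Submodule.ker_liftQ_eq_bot]
  intro a ha
  exact (hker a).1 (LinearMap.mem_ker.1 ha)

private lemma aux_comap (P : Set (ModuleCat.{u} Λᵐᵒᵖ)) (hP : IsPrelocSubcat Λ P)
    (L : Submodule Λᵐᵒᵖ Λ) (hL : ModuleCat.of Λᵐᵒᵖ (Λ ⧸ L) ∈ P) (a : Λ) :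
    ModuleCat.of Λᵐᵒᵖ (Λ ⧸ Submodule.comap (leftMulMap Λ a) L) ∈ P := by
  have hker : LinearMap.ker (L.mkQ.comp (leftMulMap Λ a))
      = Submodule.comap (leftMulMap Λ a) L := by
    rw [LinearMap.ker_comp, Submodule.ker_mkQ]
  refine hP.1 _ _ (ModuleCat.ofHom (Submodule.liftQ _ (L.mkQ.comp (leftMulMap Λ a)) hker.ge) :
    ModuleCat.of Λᵐᵒᵖ (Λ ⧸ Submodule.comap (leftMulMap Λ a) L) ⟶ ModuleCat.of Λᵐᵒᵖ (Λ ⧸ L))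
    ?_ hL
  rw [ModuleCat.mono_iff_ker_eq_bot, ModuleCat.hom_ofHom, Submodule.ker_liftQ_eq_bot]
  exact hker.le

private lemma aux_finset_inf (F : Set (Submodule Λᵐᵒᵖ Λ)) (hF : IsPrelocFilter Λ F)
    {ι : Type u} (s : Finset ι) (g : ι → Submodule Λᵐᵒᵖ Λ) (hg : ∀ i ∈ s, g i ∈ F) :
    s.inf g ∈ F := by
  classical
  induction s using Finset.cons_induction with
  | empty => simpa using hF.1
  | cons i s hi ih =>
    rw [Finset.inf_cons]
    exact hF.2.2.1 _ _ (hg i (Finset.mem_cons_self i s))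
      (ih fun j hj => hg j (Finset.mem_cons_of_mem hj))

private lemma aux_quot_ann_mem (P : Set (ModuleCat.{u} Λᵐᵒᵖ)) (hP : IsPrelocSubcat Λ P)
    (M : ModuleCat.{u} Λᵐᵒᵖ) (hM : M ∈ P) (x : M) :
    ModuleCat.of Λᵐᵒᵖ (Λ ⧸ LinearMap.ker (annMap Λ x)) ∈ P := by
  refine hP.1 M _ (ModuleCat.ofHom (Submodule.liftQ _ (annMap Λ x) le_rfl) :
    ModuleCat.of Λᵐᵒᵖ (Λ ⧸ LinearMap.ker (annMap Λ x)) ⟶ M) ?_ hM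
  rw [ModuleCat.mono_iff_ker_eq_bot, ModuleCat.hom_ofHom, Submodule.ker_liftQ_eq_bot]
  exact le_rfl

private lemma aux_mem_of_ann (P : Set (ModuleCat.{u} Λᵐᵒᵖ)) (hP : IsPrelocSubcat Λ P)
    (M : ModuleCat.{u} Λᵐᵒᵖ)
    (hM : ∀ x : M, ModuleCat.of Λᵐᵒᵖ (Λ ⧸ LinearMap.ker (annMap Λ x)) ∈ P) :
    M ∈ P := by
  classical
  have hD := hP.2.2 (M : Type u)
    (fun x => ModuleCat.of Λᵐᵒᵖ (Λ ⧸ LinearMap.ker (annMap Λ x))) hM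
  let φ : ∀ x : M, (Λ ⧸ LinearMap.ker (annMap Λ x)) →ₗ[Λᵐᵒᵖ] M :=
    fun x => Submodule.liftQ _ (annMap Λ x) le_rfl
  refine hP.2.1 _ M (ModuleCat.ofHom (DirectSum.toModule Λᵐᵒᵖ (M : Type u) M φ :
    (⨁ x : (M : Type u), (Λ ⧸ LinearMap.ker (annMap Λ x))) →ₗ[Λᵐᵒᵖ] M) :
    ModuleCat.of Λᵐᵒᵖ (⨁ x : (M : Type u), (Λ ⧸ LinearMap.ker (annMap Λ x))) ⟶ M) ?_ hD
  rw [ModuleCat.epi_iff_surjective]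
  intro m
  refine ⟨DirectSum.lof Λᵐᵒᵖ (M : Type u) _ m (Submodule.Quotient.mk (1 : Λ)), ?_⟩
  erw [DirectSum.toModule_lof]
  show (φ m) (Submodule.Quotient.mk (1 : Λ)) = m
  rw [Submodule.liftQ_apply]
  show MulOpposite.op (1 : Λ) • m = m
  simp

private lemma aux_quot_ann_filter (F : Set (Submodule Λᵐᵒᵖ Λ)) (hF : IsPrelocFilter Λ F)
    (L : Submodule Λᵐᵒᵖ Λ) :
    (∀ x : Λ ⧸ L, LinearMap.ker (annMap Λ x) ∈ F) ↔ L ∈ F := by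
  constructor
  · intro h
    have hh := h (Submodule.Quotient.mk 1)
    have e : LinearMap.ker (annMap Λ (Submodule.Quotient.mk (1:Λ) : Λ ⧸ L)) = L := by
      ext a
      simp only [LinearMap.mem_ker, annMap, LinearMap.coe_mk, AddHom.coe_mk,
        ← Submodule.Quotient.mk_smul, Submodule.Quotient.mk_eq_zero,
        MulOpposite.smul_eq_mul_unop, MulOpposite.unop_op, one_mul]
    rwa [e] at hh
  · intro hL x
    obtain ⟨b, rfl⟩ := Submodule.mkQ_surjective L x
    have e : LinearMap.ker (annMap Λ (L.mkQ b)) = Submodule.comap (leftMulMap Λ b) L := by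
      ext a
      simp only [LinearMap.mem_ker, annMap, LinearMap.coe_mk, AddHom.coe_mk,
        Submodule.mkQ_apply, ← Submodule.Quotient.mk_smul, Submodule.Quotient.mk_eq_zero,
        MulOpposite.smul_eq_mul_unop, MulOpposite.unop_op, Submodule.mem_comap, leftMulMap]
    rw [e]
    exact hF.2.2.2 L hL b

end Aux

/-- **Gabriel's classification.** For a ring `Λ`, the assignment
`𝒴 ↦ {L | Λ/L ∈ 𝒴}` is a bijection from the prelocalizing subcategories of the category
of right `Λ`-modules onto the prelocalizing filters of right ideals of `Λ`, with inverse
`ℱ ↦ {M | Ann(x) ∈ ℱ for every x ∈ M}`. -/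
theorem preloc_subcat_filter_bijection :
    (∀ P : Set (ModuleCat.{u} Λᵐᵒᵖ), IsPrelocSubcat Λ P → IsPrelocFilter Λ (toFilter Λ P)) ∧
    (∀ F : Set (Submodule Λᵐᵒᵖ Λ), IsPrelocFilter Λ F → IsPrelocSubcat Λ (toSubcat Λ F)) ∧
    (∀ P : Set (ModuleCat.{u} Λᵐᵒᵖ), IsPrelocSubcat Λ P → toSubcat Λ (toFilter Λ P) = P) ∧
    (∀ F : Set (Submodule Λᵐᵒᵖ Λ), IsPrelocFilter Λ F → toFilter Λ (toSubcat Λ F) = F) := by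
  refine ⟨?_, ?_, ?_, ?_⟩
  · -- subcategory to filter
    intro P hP
    refine ⟨?_, ?_, ?_, ?_⟩
    · exact aux_subsingleton_mem P hP _
        ((Submodule.Quotient.subsingleton_iff).2 rfl)
    · intro I J hI hIJ
      exact aux_upward P hP I J hI hIJ
    · intro I J hI hJ
      exact aux_inter P hP I J hI hJ
    · intro L hL a
      exact aux_comap P hP L hL a
  · -- filter to subcategory
    intro F hF
    refine ⟨?_, ?_, ?_⟩
    · intro M N f hf hM x
      have hinj := (ModuleCat.mono_iff_injective f).1 hf
      have e : LinearMap.ker (annMap Λ x) = LinearMap.ker (annMap Λ (f x)) := by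
        ext a
        simp only [LinearMap.mem_ker, annMap, LinearMap.coe_mk, AddHom.coe_mk]
        constructor
        · intro h; rw [← map_smul f.hom, h, map_zero]
        · intro h
          apply hinj
          rw [map_smul f.hom, h, map_zero]
      rw [e]; exact hM (f x)
    · intro M N f hf hM x
      obtain ⟨y, rfl⟩ := (ModuleCat.epi_iff_surjective f).1 hf x
      refine hF.2.1 _ _ (hM y) ?_
      intro a ha
      simp only [LinearMap.mem_ker, annMap, LinearMap.coe_mk, AddHom.coe_mk] at ha ⊢
      rw [← map_smul f.hom, ha, map_zero]
    · intro ι M hM x'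
      classical
      let x : ⨁ i, (M i : Type u) := x'
      show LinearMap.ker (annMap Λ x) ∈ F
      refine hF.2.1 _ _ (aux_finset_inf F hF x.support
        (fun i => LinearMap.ker (annMap Λ (x i))) (fun i _ => hM i (x i))) ?_
      intro a ha
      rw [Submodule.mem_finsetInf] at ha
      simp only [LinearMap.mem_ker, annMap, LinearMap.coe_mk, AddHom.coe_mk]
      refine DFinsupp.ext fun i => ?_
      rw [DirectSum.smul_apply]
      by_cases hi : i ∈ x.support
      · simpa [annMap] using ha i hi
      · rw [DFinsupp.notMem_support_iff.1 hi, smul_zero]; rfl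
  · -- left inverse
    intro P hP
    ext M
    constructor
    · intro hM
      exact aux_mem_of_ann P hP M (fun x => hM x)
    · intro hM x
      exact aux_quot_ann_mem P hP M hM x
  · -- right inverse
    intro F hF
    ext L
    exact (aux_quot_ann_filter F hF L).trans Iff.rfl
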